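/- arXiv:2306.06535 — 3 statements merged into one kernel-verified Lean document; each statement's English description precedes it below -/
import Mathlib

section
/- Let p ∈ [1,∞) and let f : ℝ \ {0} → ℂ be measurable with f(z) = f(−1/z) for all z ≠ 0. Define f̃ : ℝ → ℂ by f̃(k) = f(z₊(k)) with z₊(k) = (k + √(k² + 4))/2. Then ∫_ℝ |f(z)|^p dz = ∫_ℝ |f̃(k)|^p dk (both sides being equal, possibly both infinite). In particular f ∈ L^p(ℝ) if and only if f̃ ∈ L^p(ℝ), with equal norms. -/
open MeasureTheory Filter Set
open scoped Topology ENNReal NNReal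

noncomputable section

theorem my_lintegral_image {s : Set ℝ} {f : ℝ → ℝ} {f' : ℝ → ℝ}
    (hs : MeasurableSet s) (hf' : ∀ x ∈ s, HasDerivWithinAt f (f' x) s x)
    (hf : InjOn f s) (g : ℝ → ℝ≥0∞) :
    ∫⁻ x in f '' s, g x = ∫⁻ x in s, ENNReal.ofReal |f' x| * g (f x) := by
  simpa only [ContinuousLinearMap.det_toSpanSingleton] using
    lintegral_image_eq_lintegral_abs_det_fderiv_mul volume hs
      (fun x hx => (hf' x hx).hasFDerivWithinAt) hf g

/-- `z₊(k) = (k + √(k² + 4))/2`, the positive solution of `z - 1/z = k`. -/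
def zplus (k : ℝ) : ℝ := (k + Real.sqrt (k ^ 2 + 4)) / 2

def zminus (k : ℝ) : ℝ := (k - Real.sqrt (k ^ 2 + 4)) / 2

lemma sq4_pos (k : ℝ) : (0:ℝ) < k ^ 2 + 4 := by positivity

lemma sqrt_sq4 (k : ℝ) : Real.sqrt (k ^ 2 + 4) ^ 2 = k ^ 2 + 4 :=
  Real.sq_sqrt (sq4_pos k).le

lemma abs_lt_sqrt (k : ℝ) : |k| < Real.sqrt (k ^ 2 + 4) := by
  have h : |k| = Real.sqrt (k ^ 2) := by rw [Real.sqrt_sq_eq_abs]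
  rw [h]
  exact Real.sqrt_lt_sqrt (sq_nonneg k) (by linarith)

lemma zplus_pos (k : ℝ) : 0 < zplus k := by
  have := abs_lt_sqrt k
  have := neg_abs_le k
  unfold zplus; nlinarith

lemma zminus_neg (k : ℝ) : zminus k < 0 := by
  have := abs_lt_sqrt k
  have := le_abs_self k
  unfold zminus; nlinarith

lemma zminus_eq (k : ℝ) : zminus k = -1 / zplus k := by
  have h := zplus_pos k
  have hs := sqrt_sq4 k
  field_simp
  unfold zminus zplus at *
  nlinarith

lemma zplus_inv (k : ℝ) : zplus k - 1 / zplus k = k := by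
  have h := zplus_pos k
  have hs := sqrt_sq4 k
  field_simp
  unfold zplus at *
  nlinarith

lemma zplus_injective : Function.Injective zplus := by
  intro a b h
  have := zplus_inv a
  have := zplus_inv b
  rw [h] at *
  linarith

lemma range_zplus : range zplus = Ioi 0 := by
  ext z
  simp only [mem_range, mem_Ioi]
  constructor
  · rintro ⟨k, rfl⟩; exact zplus_pos k
  · intro hz
    refine ⟨z - 1/z, ?_⟩
    have h1 : Real.sqrt ((z - 1/z) ^ 2 + 4) = z + 1/z := by
      rw [show (z - 1/z) ^ 2 + 4 = (z + 1/z) ^ 2 by field_simp; ring]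
      exact Real.sqrt_sq (by positivity)
    unfold zplus
    rw [h1]; field_simp; ring

lemma range_zminus : range zminus = Iio 0 := by
  ext z
  simp only [mem_range, mem_Iio]
  constructor
  · rintro ⟨k, rfl⟩; exact zminus_neg k
  · intro hz
    obtain ⟨k, hk⟩ : -1/z ∈ range zplus := by
      rw [range_zplus]; exact div_pos_of_neg_of_neg (by norm_num) hz
    refine ⟨k, ?_⟩
    rw [zminus_eq, hk]
    field_simp

lemma hasDerivAt_zplus (k : ℝ) :
    HasDerivAt zplus ((1 + k / Real.sqrt (k ^ 2 + 4)) / 2) k := by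
  have hs : Real.sqrt (k ^ 2 + 4) ≠ 0 := by
    positivity
  have h1 : HasDerivAt (fun k : ℝ => k ^ 2 + 4) (2 * k) k := by
    simpa using ((hasDerivAt_pow 2 k).add_const 4)
  have h2 : HasDerivAt (fun k : ℝ => Real.sqrt (k ^ 2 + 4))
      (2 * k / (2 * Real.sqrt (k ^ 2 + 4))) k :=
    (Real.hasDerivAt_sqrt (by positivity)).comp k h1 |>.congr_deriv (by ring)
  have := ((hasDerivAt_id k).add h2).div_const 2
  refine this.congr_deriv ?_
  field_simp

lemma hasDerivAt_zminus (k : ℝ) :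
    HasDerivAt zminus ((1 - k / Real.sqrt (k ^ 2 + 4)) / 2) k := by
  have h1 : HasDerivAt (fun k : ℝ => k ^ 2 + 4) (2 * k) k := by
    simpa using ((hasDerivAt_pow 2 k).add_const 4)
  have h2 : HasDerivAt (fun k : ℝ => Real.sqrt (k ^ 2 + 4))
      (2 * k / (2 * Real.sqrt (k ^ 2 + 4))) k :=
    (Real.hasDerivAt_sqrt (by positivity)).comp k h1 |>.congr_deriv (by ring)
  have := ((hasDerivAt_id k).sub h2).div_const 2
  refine this.congr_deriv ?_
  have hs : Real.sqrt (k ^ 2 + 4) ≠ 0 := by positivity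
  field_simp

lemma measurable_zplus : Measurable zplus := by
  apply Continuous.measurable
  unfold zplus
  fun_prop

lemma zminus_injective : Function.Injective zminus := by
  intro a b h
  rw [zminus_eq, zminus_eq] at h
  have ha := (zplus_pos a).ne'
  have hb := (zplus_pos b).ne'
  apply zplus_injective
  field_simp at h
  linarith

lemma deriv_plus_nonneg (k : ℝ) : 0 ≤ (1 + k / Real.sqrt (k ^ 2 + 4)) / 2 := by
  have h := abs_lt_sqrt k
  have hs : (0:ℝ) < Real.sqrt (k ^ 2 + 4) := by positivity
  have : -1 < k / Real.sqrt (k ^ 2 + 4) := by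
    rw [lt_div_iff₀ hs]
    have := neg_abs_le k
    nlinarith
  linarith

lemma deriv_minus_nonneg (k : ℝ) : 0 ≤ (1 - k / Real.sqrt (k ^ 2 + 4)) / 2 := by
  have h := abs_lt_sqrt k
  have hs : (0:ℝ) < Real.sqrt (k ^ 2 + 4) := by positivity
  have : k / Real.sqrt (k ^ 2 + 4) < 1 := by
    rw [div_lt_one hs]
    have := le_abs_self k
    nlinarith
  linarith


/-- Change of variables for symmetric functions: if `f(z) = f(-1/z)` for
all `z ≠ 0`, then for every `p ∈ [1,∞)`, `∫_ℝ |f(z)|^p dz = ∫_ℝ |f(z₊(k))|^p dk` (both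
sides possibly infinite); in particular `f ∈ L^p` iff `f̃ ∈ L^p`, with equal norms. -/
theorem symm_change_of_variables (p : ℝ) (hp : 1 ≤ p) (f : ℝ → ℂ) (hf : Measurable f)
    (hsym : ∀ z : ℝ, z ≠ 0 → f z = f (-1 / z)) :
    (∫⁻ z : ℝ, (‖f z‖₊ : ℝ≥0∞) ^ p) = (∫⁻ k : ℝ, (‖f (zplus k)‖₊ : ℝ≥0∞) ^ p) ∧
    eLpNorm f (ENNReal.ofReal p) (volume : Measure ℝ) =
      eLpNorm (fun k => f (zplus k)) (ENNReal.ofReal p) (volume : Measure ℝ) ∧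
    (MemLp f (ENNReal.ofReal p) (volume : Measure ℝ) ↔
      MemLp (fun k => f (zplus k)) (ENNReal.ofReal p) (volume : Measure ℝ)) := by
  set g : ℝ → ℝ≥0∞ := fun z => (‖f z‖₊ : ℝ≥0∞) ^ p with hg
  set dp : ℝ → ℝ := fun k => (1 + k / Real.sqrt (k ^ 2 + 4)) / 2 with hdp
  set dm : ℝ → ℝ := fun k => (1 - k / Real.sqrt (k ^ 2 + 4)) / 2 with hdm
  have hgm : Measurable g := (hf.nnnorm.coe_nnreal_ennreal).pow_const p
  have hgsym : ∀ k, g (zminus k) = g (zplus k) := by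
    intro k
    have h0 := (zplus_pos k).ne'
    rw [zminus_eq, hg]
    simp only [← hsym (zplus k) h0]
  have hplus : ∫⁻ z in Ioi (0:ℝ), g z
      = ∫⁻ k, ENNReal.ofReal |dp k| * g (zplus k) := by
    have := my_lintegral_image (s := univ) (f := zplus) (f' := dp)
      MeasurableSet.univ
      (fun x _ => (hasDerivAt_zplus x).hasDerivWithinAt)
      zplus_injective.injOn g
    rwa [image_univ, range_zplus, setLIntegral_univ] at this
  have hminus : ∫⁻ z in Iio (0:ℝ), g z
      = ∫⁻ k, ENNReal.ofReal |dm k| * g (zplus k) := by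
    have := my_lintegral_image (s := univ) (f := zminus) (f' := dm)
      MeasurableSet.univ
      (fun x _ => (hasDerivAt_zminus x).hasDerivWithinAt)
      zminus_injective.injOn g
    rw [image_univ, range_zminus, setLIntegral_univ] at this
    rw [this]
    exact lintegral_congr fun k => by rw [hgsym]
  have hmeas1 : Measurable fun k => ENNReal.ofReal |dm k| * g (zplus k) := by
    apply Measurable.mul
    · apply Measurable.ennreal_ofReal
      apply Continuous.measurable
      apply Continuous.abs
      have hc : Continuous fun k : ℝ => k / Real.sqrt (k ^ 2 + 4) :=
        Continuous.div continuous_id (by fun_prop) (fun x => by positivity)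
      exact (continuous_const.sub hc).div_const 2
    · exact hgm.comp measurable_zplus
  have key : (∫⁻ z : ℝ, g z) = ∫⁻ k : ℝ, g (zplus k) := by
    have hsplit : (∫⁻ z : ℝ, g z) = (∫⁻ z in Iio (0:ℝ), g z) + ∫⁻ z in Ioi (0:ℝ), g z := by
      rw [← lintegral_union measurableSet_Ioi (Iic_disjoint_Ioi le_rfl |>.mono_left Iio_subset_Iic_self),
        Set.Iio_union_Ioi]
      rw [← lintegral_add_compl g (measurableSet_singleton (0:ℝ)),
        setLIntegral_measure_zero _ _ (measure_singleton (0:ℝ)), zero_add]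
    rw [hsplit, hminus, hplus, ← lintegral_add_left hmeas1]
    refine lintegral_congr fun k => ?_
    rw [← add_mul, ← ENNReal.ofReal_add (abs_nonneg _) (abs_nonneg _),
      abs_of_nonneg (deriv_minus_nonneg k), abs_of_nonneg (deriv_plus_nonneg k)]
    have : dm k + dp k = 1 := by unfold dm dp; ring
    rw [this, ENNReal.ofReal_one, one_mul]
  have hq0 : ENNReal.ofReal p ≠ 0 := by
    simp [ENNReal.ofReal_eq_zero]; linarith
  have hqt : ENNReal.ofReal p ≠ ∞ := ENNReal.ofReal_ne_top
  have htr : (ENNReal.ofReal p).toReal = p := ENNReal.toReal_ofReal (by linarith)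
  have help : eLpNorm f (ENNReal.ofReal p) (volume : Measure ℝ) =
      eLpNorm (fun k => f (zplus k)) (ENNReal.ofReal p) (volume : Measure ℝ) := by
    rw [eLpNorm_eq_lintegral_rpow_enorm_toReal hq0 hqt,
      eLpNorm_eq_lintegral_rpow_enorm_toReal hq0 hqt, htr]
    exact congrArg (· ^ (1 / p)) key
  refine ⟨key, help, ?_⟩
  constructor
  · intro h
    exact ⟨((hf.comp measurable_zplus).aestronglyMeasurable), help ▸ h.2⟩
  · intro h
    exact ⟨hf.aestronglyMeasurable, help ▸ h.2⟩
end
end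

section
/- For all measurable functions F, G : (0,∞) → [0,∞], ∫₀^∞ ( ∫_y^∞ F(k) dk ) ( ∫_y^∞ G(k) dk ) dy ≤ ( ∫₀^∞ k^{1/2} F(k) dk ) ( ∫₀^∞ k^{1/2} G(k) dk ), where both sides may be infinite. -/
open MeasureTheory Filter Set
open scoped Topology ENNReal

noncomputable section

/-- For all measurable `F, G : (0,∞) → [0,∞]`,
`∫₀^∞ (∫_y^∞ F)(∫_y^∞ G) dy ≤ (∫₀^∞ √k F(k) dk)(∫₀^∞ √k G(k) dk)`. -/
theorem hardy_type_inequality_half (F G : ℝ → ℝ≥0∞)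
    (hF : Measurable F) (hG : Measurable G) :
    (∫⁻ y in Set.Ioi (0 : ℝ), (∫⁻ k in Set.Ioi y, F k) * ∫⁻ k in Set.Ioi y, G k) ≤
      (∫⁻ k in Set.Ioi (0 : ℝ), ENNReal.ofReal (Real.sqrt k) * F k) *
        ∫⁻ k in Set.Ioi (0 : ℝ), ENNReal.ofReal (Real.sqrt k) * G k := by
  classical
  set ind : ℝ → ℝ → ℝ≥0∞ := fun y k => if y < k then 1 else 0 with hind
  have hindm1 : ∀ k : ℝ, Measurable fun y => ind y k := by
    intro k
    exact Measurable.ite measurableSet_Iio measurable_const measurable_const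
  have hindm2 : ∀ y : ℝ, Measurable fun k => ind y k := by
    intro y
    exact Measurable.ite measurableSet_Ioi measurable_const measurable_const
  -- tail rewrite
  have tail : ∀ (H : ℝ → ℝ≥0∞), ∀ y : ℝ, 0 < y →
      (∫⁻ k in Ioi y, H k) = ∫⁻ k in Ioi 0, H k * ind y k := by
    intro H y hy
    have h1 : ∀ k, H k * ind y k = (Ioi y).indicator H k := by
      intro k
      by_cases h : y < k <;> simp [hind, Set.indicator_apply, Set.mem_Ioi, h]
    simp_rw [h1]
    rw [lintegral_indicator measurableSet_Ioi,
      Measure.restrict_restrict measurableSet_Ioi,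
      Set.inter_eq_left.mpr (Ioi_subset_Ioi hy.le)]
  -- step 1: product as double integral
  have step1 : ∀ y ∈ Ioi (0 : ℝ),
      (∫⁻ k in Ioi y, F k) * ∫⁻ k in Ioi y, G k
        = ∫⁻ k in Ioi 0, ∫⁻ l in Ioi 0, (F k * ind y k) * (G l * ind y l) := by
    intro y hy
    rw [tail F y hy, tail G y hy]
    rw [← lintegral_mul_const (f := fun k => F k * ind y k) _ ((hF.mul (hindm2 y)))]
    refine lintegral_congr fun k => ?_
    rw [← lintegral_const_mul (f := fun k => G k * ind y k) _ (hG.mul (hindm2 y))]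
  rw [setLIntegral_congr_fun measurableSet_Ioi step1]
  -- measurability of triple integrand
  have mΦ : Measurable fun p : ℝ × ℝ × ℝ =>
      (F p.2.1 * ind p.1 p.2.1) * (G p.2.2 * ind p.1 p.2.2) := by
    have m1 : Measurable fun p : ℝ × ℝ × ℝ => ind p.1 p.2.1 :=
      Measurable.ite (measurableSet_lt measurable_fst (measurable_fst.comp measurable_snd))
        measurable_const measurable_const
    have m2 : Measurable fun p : ℝ × ℝ × ℝ => ind p.1 p.2.2 :=
      Measurable.ite (measurableSet_lt measurable_fst (measurable_snd.comp measurable_snd))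
        measurable_const measurable_const
    exact ((hF.comp (measurable_fst.comp measurable_snd)).mul m1).mul
      ((hG.comp (measurable_snd.comp measurable_snd)).mul m2)
  -- swap 1: y ↔ k
  have swap1 :
      (∫⁻ y in Ioi (0:ℝ), ∫⁻ k in Ioi (0:ℝ), ∫⁻ l in Ioi (0:ℝ),
          (F k * ind y k) * (G l * ind y l))
        = ∫⁻ k in Ioi (0:ℝ), ∫⁻ y in Ioi (0:ℝ), ∫⁻ l in Ioi (0:ℝ),
            (F k * ind y k) * (G l * ind y l) := by
    apply lintegral_lintegral_swap
    have h : Measurable fun x : ℝ × ℝ =>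
        ∫⁻ l in Ioi (0:ℝ), (F x.2 * ind x.1 x.2) * (G l * ind x.1 l) :=
      Measurable.lintegral_prod_right'
        (mΦ.comp (measurable_fst.fst.prodMk (measurable_fst.snd.prodMk measurable_snd)))
    exact h.aemeasurable
  rw [swap1]
  -- swap 2: y ↔ l, for each k
  have swap2 : ∀ k : ℝ,
      (∫⁻ y in Ioi (0:ℝ), ∫⁻ l in Ioi (0:ℝ), (F k * ind y k) * (G l * ind y l))
        = ∫⁻ l in Ioi (0:ℝ), ∫⁻ y in Ioi (0:ℝ), (F k * ind y k) * (G l * ind y l) := by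
    intro k
    apply lintegral_lintegral_swap
    apply Measurable.aemeasurable
    exact mΦ.comp (measurable_fst.prodMk (measurable_const.prodMk measurable_snd))
  rw [lintegral_congr swap2]
  -- integrate out y
  have yint : ∀ k l : ℝ, 0 < k → 0 < l →
      (∫⁻ y in Ioi (0:ℝ), (F k * ind y k) * (G l * ind y l))
        = F k * G l * ENNReal.ofReal (min k l) := by
    intro k l hk hl
    have h1 : ∀ y, (F k * ind y k) * (G l * ind y l)
        = (Iio (min k l)).indicator (fun _ => F k * G l) y := by
      intro y
      by_cases h1 : y < k <;> by_cases h2 : y < l <;>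
        simp [hind, Set.indicator_apply, lt_min_iff, h1, h2, mul_comm, mul_assoc, mul_left_comm]
    simp_rw [h1]
    rw [lintegral_indicator measurableSet_Iio, Measure.restrict_restrict measurableSet_Iio,
      Set.Iio_inter_Ioi, setLIntegral_const, Real.volume_Ioo, sub_zero]
  have key : ∀ k ∈ Ioi (0:ℝ), ∀ l ∈ Ioi (0:ℝ),
      F k * G l * ENNReal.ofReal (min k l)
        ≤ (ENNReal.ofReal (Real.sqrt k) * F k) * (ENNReal.ofReal (Real.sqrt l) * G l) := by
    intro k hk l hl
    have hmin : min k l ≤ Real.sqrt k * Real.sqrt l := by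
      have h0 : (0:ℝ) ≤ min k l := le_of_lt (lt_min hk hl)
      calc min k l = Real.sqrt (min k l) * Real.sqrt (min k l) :=
            (Real.mul_self_sqrt h0).symm
        _ ≤ Real.sqrt k * Real.sqrt l :=
            mul_le_mul (Real.sqrt_le_sqrt (min_le_left _ _))
              (Real.sqrt_le_sqrt (min_le_right _ _)) (Real.sqrt_nonneg _) (Real.sqrt_nonneg _)
    calc F k * G l * ENNReal.ofReal (min k l)
        ≤ F k * G l * (ENNReal.ofReal (Real.sqrt k) * ENNReal.ofReal (Real.sqrt l)) := by
          refine mul_le_mul_right ?_ _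
          rw [← ENNReal.ofReal_mul (Real.sqrt_nonneg k)]
          exact ENNReal.ofReal_le_ofReal hmin
      _ = (ENNReal.ofReal (Real.sqrt k) * F k) * (ENNReal.ofReal (Real.sqrt l) * G l) := by
          ring
  have hF' : Measurable fun k => ENNReal.ofReal (Real.sqrt k) * F k :=
    (ENNReal.measurable_ofReal.comp Real.continuous_sqrt.measurable).mul hF
  have hG' : Measurable fun l => ENNReal.ofReal (Real.sqrt l) * G l :=
    (ENNReal.measurable_ofReal.comp Real.continuous_sqrt.measurable).mul hG
  calc (∫⁻ k in Ioi (0:ℝ), ∫⁻ l in Ioi (0:ℝ), ∫⁻ y in Ioi (0:ℝ),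
          (F k * ind y k) * (G l * ind y l))
      = ∫⁻ k in Ioi (0:ℝ), ∫⁻ l in Ioi (0:ℝ), F k * G l * ENNReal.ofReal (min k l) := by
        refine setLIntegral_congr_fun measurableSet_Ioi
          (fun k hk => ?_)
        exact setLIntegral_congr_fun measurableSet_Ioi
          (fun l hl => yint k l hk hl)
    _ ≤ ∫⁻ k in Ioi (0:ℝ), ∫⁻ l in Ioi (0:ℝ),
          (ENNReal.ofReal (Real.sqrt k) * F k) * (ENNReal.ofReal (Real.sqrt l) * G l) := by
        refine setLIntegral_mono' measurableSet_Ioi fun k hk => ?_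
        exact setLIntegral_mono' measurableSet_Ioi fun l hl => key k hk l hl
    _ = (∫⁻ k in Ioi (0:ℝ), ENNReal.ofReal (Real.sqrt k) * F k) *
          ∫⁻ k in Ioi (0:ℝ), ENNReal.ofReal (Real.sqrt k) * G k := by
        rw [← lintegral_mul_const _ hF']
        exact lintegral_congr fun k => lintegral_const_mul _ hG'
end
end

section
/- For all measurable functions F, G : (0,∞) → [0,∞], ∫₀^∞ y² ( ∫_y^∞ F(k) dk ) ( ∫_y^∞ G(k) dk ) dy ≤ (1/3) ( ∫₀^∞ k^{3/2} F(k) dk ) ( ∫₀^∞ k^{3/2} G(k) dk ), where both sides may be infinite. -/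
open MeasureTheory Filter Set
open scoped Topology ENNReal

noncomputable section

namespace HardyAux

lemma lintegral_sq_Ioo (m : ℝ) (hm : 0 < m) :
    ∫⁻ y in Set.Ioo (0:ℝ) m, ENNReal.ofReal (y ^ 2) = ENNReal.ofReal (m ^ 3 / 3) := by
  rw [← ofReal_integral_eq_lintegral_ofReal]
  · rw [← integral_Ioc_eq_integral_Ioo, ← intervalIntegral.integral_of_le hm.le,
      integral_pow]
    norm_num
  · exact ((intervalIntegral.intervalIntegrable_pow 2).1.mono_set Ioo_subset_Ioc_self)
  · exact ae_of_all _ fun y => sq_nonneg y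

lemma min_cube_le (k l : ℝ) (hk : 0 < k) (hl : 0 < l) :
    min k l ^ 3 / 3 ≤ k ^ ((3:ℝ)/2) * l ^ ((3:ℝ)/2) / 3 := by
  have hm : 0 < min k l := lt_min hk hl
  have h1 : min k l ^ 3 = min k l ^ ((3:ℝ)/2) * min k l ^ ((3:ℝ)/2) := by
    rw [← Real.rpow_add hm]
    norm_num
  have h2 : min k l ^ ((3:ℝ)/2) ≤ k ^ ((3:ℝ)/2) :=
    Real.rpow_le_rpow hm.le (min_le_left _ _) (by norm_num)
  have h3 : min k l ^ ((3:ℝ)/2) ≤ l ^ ((3:ℝ)/2) :=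
    Real.rpow_le_rpow hm.le (min_le_right _ _) (by norm_num)
  have := mul_le_mul h2 h3 (Real.rpow_nonneg hm.le _) (Real.rpow_nonneg hk.le _)
  rw [h1]
  linarith

end HardyAux

/-- For all measurable `F, G : (0,∞) → [0,∞]`,
`∫₀^∞ y² (∫_y^∞ F)(∫_y^∞ G) dy ≤ (1/3)(∫₀^∞ k^{3/2} F(k) dk)(∫₀^∞ k^{3/2} G(k) dk)`. -/
theorem hardy_type_inequality_threehalves (F G : ℝ → ℝ≥0∞)
    (hF : Measurable F) (hG : Measurable G) :
    (∫⁻ y in Set.Ioi (0 : ℝ),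
        ENNReal.ofReal (y ^ 2) * ((∫⁻ k in Set.Ioi y, F k) * ∫⁻ k in Set.Ioi y, G k)) ≤
      (3 : ℝ≥0∞)⁻¹ *
        ((∫⁻ k in Set.Ioi (0 : ℝ), ENNReal.ofReal (k ^ ((3 : ℝ) / 2)) * F k) *
          ∫⁻ k in Set.Ioi (0 : ℝ), ENNReal.ofReal (k ^ ((3 : ℝ) / 2)) * G k) := by
  set μ : Measure ℝ := volume.restrict (Set.Ioi (0:ℝ)) with hμ
  set H : ℝ → ℝ → ℝ → ℝ≥0∞ := fun y k l =>
    (if y < k then F k else 0) * ((if y < l then G l else 0) * ENNReal.ofReal (y ^ 2))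
    with hH
  -- measurability of H on the product
  have hHm : Measurable (fun q : (ℝ × ℝ) × ℝ => H q.1.1 q.1.2 q.2) := by
    apply Measurable.mul
    · exact Measurable.ite
        (measurableSet_lt (measurable_fst.comp measurable_fst)
          (measurable_snd.comp measurable_fst))
        (hF.comp (measurable_snd.comp measurable_fst)) measurable_const
    · apply Measurable.mul
      · exact Measurable.ite
          (measurableSet_lt (measurable_fst.comp measurable_fst) measurable_snd)
          (hG.comp measurable_snd) measurable_const
      · exact (ENNReal.measurable_ofReal.comp
          ((measurable_fst.comp measurable_fst).pow_const 2))
  -- step A: rewrite LHS as triple integral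
  have stepA : ∀ y ∈ Set.Ioi (0:ℝ),
      ENNReal.ofReal (y ^ 2) * ((∫⁻ k in Set.Ioi y, F k) * ∫⁻ k in Set.Ioi y, G k)
        = ∫⁻ k in Set.Ioi (0:ℝ), ∫⁻ l in Set.Ioi (0:ℝ), H y k l := by
    intro y hy
    have hsub : Set.Ioi y ⊆ Set.Ioi (0:ℝ) := Ioi_subset_Ioi (le_of_lt hy)
    have hres : μ.restrict (Set.Ioi y) = volume.restrict (Set.Ioi y) := by
      rw [hμ, Measure.restrict_restrict measurableSet_Ioi, Set.inter_eq_left.mpr hsub]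
    have hFint : (∫⁻ k in Set.Ioi (0:ℝ), if y < k then F k else 0) = ∫⁻ k in Set.Ioi y, F k := by
      have : (fun k => if y < k then F k else 0) = (Set.Ioi y).indicator F := by
        ext k; simp [Set.indicator_apply, Set.mem_Ioi]
      rw [this, lintegral_indicator measurableSet_Ioi, hres]
    have hGint : (∫⁻ l in Set.Ioi (0:ℝ), if y < l then G l else 0) = ∫⁻ l in Set.Ioi y, G l := by
      have : (fun l => if y < l then G l else 0) = (Set.Ioi y).indicator G := by
        ext l; simp [Set.indicator_apply, Set.mem_Ioi]
      rw [this, lintegral_indicator measurableSet_Ioi, hres]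
    have inner : ∀ k, (∫⁻ l in Set.Ioi (0:ℝ), H y k l)
        = (if y < k then F k else 0) * ((∫⁻ l in Set.Ioi y, G l) * ENNReal.ofReal (y ^ 2)) := by
      intro k
      rw [hH]
      rw [lintegral_const_mul]
      · rw [lintegral_mul_const, hGint]
        exact Measurable.ite measurableSet_Ioi hG measurable_const
      · exact (Measurable.ite measurableSet_Ioi hG measurable_const).mul_const _
    calc ENNReal.ofReal (y ^ 2) * ((∫⁻ k in Set.Ioi y, F k) * ∫⁻ k in Set.Ioi y, G k)
        = (∫⁻ k in Set.Ioi (0:ℝ), if y < k then F k else 0) *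
            ((∫⁻ l in Set.Ioi y, G l) * ENNReal.ofReal (y ^ 2)) := by
          rw [hFint]; ring
      _ = ∫⁻ k in Set.Ioi (0:ℝ), (if y < k then F k else 0) *
            ((∫⁻ l in Set.Ioi y, G l) * ENNReal.ofReal (y ^ 2)) := by
          rw [lintegral_mul_const]
          exact Measurable.ite measurableSet_Ioi hF measurable_const
      _ = ∫⁻ k in Set.Ioi (0:ℝ), ∫⁻ l in Set.Ioi (0:ℝ), H y k l := by
          exact lintegral_congr fun k => (inner k).symm
  -- LHS = triple integral
  have hLHS : (∫⁻ y in Set.Ioi (0 : ℝ),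
      ENNReal.ofReal (y ^ 2) * ((∫⁻ k in Set.Ioi y, F k) * ∫⁻ k in Set.Ioi y, G k))
      = ∫⁻ y in Set.Ioi (0:ℝ), ∫⁻ k in Set.Ioi (0:ℝ), ∫⁻ l in Set.Ioi (0:ℝ), H y k l := by
    refine lintegral_congr_ae ?_
    filter_upwards [ae_restrict_mem measurableSet_Ioi] with y hy
    exact stepA y hy
  rw [hLHS]
  -- swap 1: y and k
  have hswap1 : (∫⁻ y in Set.Ioi (0:ℝ), ∫⁻ k in Set.Ioi (0:ℝ), ∫⁻ l in Set.Ioi (0:ℝ), H y k l)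
      = ∫⁻ k in Set.Ioi (0:ℝ), ∫⁻ y in Set.Ioi (0:ℝ), ∫⁻ l in Set.Ioi (0:ℝ), H y k l := by
    apply lintegral_lintegral_swap
    exact (hHm.lintegral_prod_right').aemeasurable
  rw [hswap1]
  -- swap 2 (for each k): y and l
  have hswap2 : ∀ k, (∫⁻ y in Set.Ioi (0:ℝ), ∫⁻ l in Set.Ioi (0:ℝ), H y k l) = ∫⁻ l in Set.Ioi (0:ℝ), ∫⁻ y in Set.Ioi (0:ℝ), H y k l := by
    intro k
    apply lintegral_lintegral_swap
    have : Measurable (fun q : ℝ × ℝ => H q.1 k q.2) :=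
      hHm.comp ((measurable_fst.prodMk measurable_const).prodMk measurable_snd)
    exact this.aemeasurable
  calc (∫⁻ k in Set.Ioi (0:ℝ), ∫⁻ y in Set.Ioi (0:ℝ), ∫⁻ l in Set.Ioi (0:ℝ), H y k l)
      = ∫⁻ k in Set.Ioi (0:ℝ), ∫⁻ l in Set.Ioi (0:ℝ), ∫⁻ y in Set.Ioi (0:ℝ), H y k l := lintegral_congr fun k => hswap2 k
    _ ≤ ∫⁻ k in Set.Ioi (0:ℝ), ∫⁻ l in Set.Ioi (0:ℝ),
          (ENNReal.ofReal (k ^ ((3:ℝ)/2)) * F k) *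
          ((ENNReal.ofReal (l ^ ((3:ℝ)/2)) * G l) * (3:ℝ≥0∞)⁻¹) := by
        apply lintegral_mono_ae
        filter_upwards [ae_restrict_mem measurableSet_Ioi] with k hk
        apply lintegral_mono_ae
        filter_upwards [ae_restrict_mem measurableSet_Ioi] with l hl
        -- compute the inner y integral
        have hk' : (0:ℝ) < k := hk
        have hl' : (0:ℝ) < l := hl
        have hm : 0 < min k l := lt_min hk' hl'
        have hpt : ∀ y, H y k l
            = (Set.Iio (min k l)).indicator (fun y => ENNReal.ofReal (y ^ 2)) y
              * (F k * G l) := by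
          intro y
          rw [hH]
          by_cases h1 : y < k <;> by_cases h2 : y < l <;>
            simp [Set.indicator_apply, lt_min_iff, h1, h2] <;> ring
        have hcomp : (∫⁻ y in Set.Ioi (0:ℝ), H y k l) = ENNReal.ofReal (min k l ^ 3 / 3) * (F k * G l) := by
          calc (∫⁻ y in Set.Ioi (0:ℝ), H y k l)
              = ∫⁻ y in Set.Ioi (0:ℝ), (Set.Iio (min k l)).indicator (fun y => ENNReal.ofReal (y ^ 2)) y
                  * (F k * G l) := lintegral_congr hpt
            _ = (∫⁻ y in Set.Ioi (0:ℝ), (Set.Iio (min k l)).indicator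
                  (fun y => ENNReal.ofReal (y ^ 2)) y) * (F k * G l) := by
                rw [lintegral_mul_const]
                exact (ENNReal.measurable_ofReal.comp (measurable_id.pow_const 2)).indicator
                  measurableSet_Iio
            _ = ENNReal.ofReal (min k l ^ 3 / 3) * (F k * G l) := by
                rw [lintegral_indicator measurableSet_Iio,
                  Measure.restrict_restrict measurableSet_Iio, Set.Iio_inter_Ioi,
                  HardyAux.lintegral_sq_Ioo _ hm]
        rw [hcomp]
        have hb : ENNReal.ofReal (min k l ^ 3 / 3)
            ≤ (ENNReal.ofReal (k ^ ((3:ℝ)/2)) * ENNReal.ofReal (l ^ ((3:ℝ)/2))) * (3:ℝ≥0∞)⁻¹ := by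
          have : ENNReal.ofReal (k ^ ((3:ℝ)/2) * l ^ ((3:ℝ)/2) / 3)
              = (ENNReal.ofReal (k ^ ((3:ℝ)/2)) * ENNReal.ofReal (l ^ ((3:ℝ)/2))) * (3:ℝ≥0∞)⁻¹ := by
            rw [div_eq_mul_inv, ENNReal.ofReal_mul (by positivity),
              ENNReal.ofReal_mul (Real.rpow_nonneg hk'.le _)]
            congr 1
            rw [ENNReal.ofReal_inv_of_pos (by norm_num)]
            norm_num
          rw [← this]
          exact ENNReal.ofReal_le_ofReal (HardyAux.min_cube_le k l hk' hl')
        calc ENNReal.ofReal (min k l ^ 3 / 3) * (F k * G l)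
            ≤ ((ENNReal.ofReal (k ^ ((3:ℝ)/2)) * ENNReal.ofReal (l ^ ((3:ℝ)/2))) * (3:ℝ≥0∞)⁻¹)
                * (F k * G l) := mul_le_mul_left hb _
          _ = (ENNReal.ofReal (k ^ ((3:ℝ)/2)) * F k) *
                ((ENNReal.ofReal (l ^ ((3:ℝ)/2)) * G l) * (3:ℝ≥0∞)⁻¹) := by ring
    _ = (3:ℝ≥0∞)⁻¹ *
        ((∫⁻ k in Set.Ioi (0 : ℝ), ENNReal.ofReal (k ^ ((3 : ℝ) / 2)) * F k) *
          ∫⁻ k in Set.Ioi (0 : ℝ), ENNReal.ofReal (k ^ ((3 : ℝ) / 2)) * G k) := by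
        have hinner : ∀ k, (∫⁻ l in Set.Ioi (0:ℝ),
            (ENNReal.ofReal (k ^ ((3:ℝ)/2)) * F k) *
              ((ENNReal.ofReal (l ^ ((3:ℝ)/2)) * G l) * (3:ℝ≥0∞)⁻¹))
            = (ENNReal.ofReal (k ^ ((3:ℝ)/2)) * F k) *
              ((∫⁻ l in Set.Ioi (0:ℝ), ENNReal.ofReal (l ^ ((3:ℝ)/2)) * G l) * (3:ℝ≥0∞)⁻¹) := by
          intro k
          rw [lintegral_const_mul, lintegral_mul_const]
          · exact ((ENNReal.measurable_ofReal.comp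
              ((Real.continuous_rpow_const (by norm_num)).measurable)).mul hG)
          · exact (((ENNReal.measurable_ofReal.comp
              ((Real.continuous_rpow_const (by norm_num)).measurable)).mul hG).mul_const _)
        rw [lintegral_congr hinner, lintegral_mul_const]
        · ring
        · exact ((ENNReal.measurable_ofReal.comp ((Real.continuous_rpow_const (by norm_num)).measurable)).mul hF)
end
end
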